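/- Let N be a positive integer, G > 0, η ∈ (0,1), γ ∈ (0, G/η), and let 𝒳 be a nonempty set. Let g', g : 𝒳 → ℝ^N have components g'^n, g^n with |g'^n(x)| ≤ G and |g^n(x)| ≤ G for all x ∈ 𝒳 and all n ∈ {1,…,N}. Let x̄ ∈ 𝒳, let Q^n ∈ [γ, G/η] for each n, and define Q̂^n = max{(1−η)·Q^n + [g^n(x̄)]_+ , γ}. Let B ≥ 0 satisfy (Σ_{n=1}^N (g^n(x) − g'^n(x))²)^{1/2} ≤ B for all x ∈ 𝒳. Then (1/2)·Σ_{n=1}^N (Q̂^n − γ)² − (1/2)·Σ_{n=1}^N (Q^n − γ)² ≤ Σ_{n=1}^N Q^n·[g'^n(x̄)]_+ − γ·Σ_{n=1}^N [g^n(x̄)]_+ + (G·√N/η)·B + 2·N·G². -/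

import Mathlib

set_option maxHeartbeats 1600000 in
/-- One-step Lyapunov drift bound (Lemma 2 of COLDQ, single time-step version). -/
theorem coldq_lyapunov_drift_bound
    {X : Type*} [Nonempty X]
    (N : ℕ) (hN : 0 < N) (G η γ : ℝ)
    (hG : 0 < G) (hη0 : 0 < η) (hη1 : η < 1)
    (hγ0 : 0 < γ) (hγG : γ < G / η)
    (g' g : Fin N → X → ℝ)
    (hg' : ∀ n x, |g' n x| ≤ G) (hg : ∀ n x, |g n x| ≤ G)
    (xb : X) (Q : Fin N → ℝ)
    (hQl : ∀ n, γ ≤ Q n) (hQu : ∀ n, Q n ≤ G / η)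
    (Qh : Fin N → ℝ)
    (hQh : ∀ n, Qh n = max ((1 - η) * Q n + max (g n xb) 0) γ)
    (B : ℝ) (hB0 : 0 ≤ B)
    (hB : ∀ x, Real.sqrt (∑ n, (g n x - g' n x) ^ 2) ≤ B) :
    (1 / 2) * ∑ n, (Qh n - γ) ^ 2 - (1 / 2) * ∑ n, (Q n - γ) ^ 2 ≤
      ∑ n, Q n * max (g' n xb) 0 - γ * ∑ n, max (g n xb) 0
        + (G * Real.sqrt N / η) * B + 2 * N * G ^ 2 := by
  have hGη : G / η = G / η := rfl
  -- per-coordinate bound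
  have key : ∀ n, (1/2) * (Qh n - γ)^2 - (1/2) * (Q n - γ)^2 ≤
      Q n * max (g' n xb) 0 - γ * max (g n xb) 0
        + (G / η) * |g n xb - g' n xb| + G^2 / 2 := by
    intro n
    set p := max (g n xb) 0 with hp
    set p' := max (g' n xb) 0 with hp'
    have hp0 : 0 ≤ p := le_max_right _ _
    have hpG : p ≤ G := max_le ((abs_le.mp (hg n xb)).2) hG.le
    have hp'0 : 0 ≤ p' := le_max_right _ _
    have hQγ := hQl n
    have hQG : η * Q n ≤ G := by
      have := hQu n
      calc η * Q n ≤ η * (G / η) := by nlinarith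
        _ = G := by field_simp
    have hQG' : Q n ≤ G / η := hQu n
    -- step 1: (Qh n - γ)^2 ≤ ((1-η)*Q n + p - γ)^2
    have h1 : (Qh n - γ)^2 ≤ ((1 - η) * Q n + p - γ)^2 := by
      rw [hQh n]
      rcases le_total ((1 - η) * Q n + p) γ with h | h
      · rw [max_eq_right h, sub_self, zero_pow two_ne_zero]; positivity
      · rw [max_eq_left h]
    -- step 2: diff of |g-g'| vs p - p'
    have h2 : p - p' ≤ |g n xb - g' n xb| := by
      rcases le_total (g n xb) 0 with h | h
      · rw [hp, max_eq_right h]; linarith [hp'0, abs_nonneg (g n xb - g' n xb)]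
      · rw [hp, max_eq_left h]
        calc g n xb - p' ≤ g n xb - g' n xb := by
              have : g' n xb ≤ p' := le_max_left _ _; linarith
          _ ≤ |g n xb - g' n xb| := le_abs_self _
    have hQpos : 0 < Q n := lt_of_lt_of_le hγ0 hQγ
    have h3 : Q n * p ≤ Q n * p' + (G / η) * |g n xb - g' n xb| := by
      have : Q n * (p - p') ≤ (G / η) * |g n xb - g' n xb| := by
        rcases le_total (p - p') 0 with h | h
        · have : Q n * (p - p') ≤ 0 := mul_nonpos_of_nonneg_of_nonpos hQpos.le h
          have h0 : 0 ≤ (G / η) * |g n xb - g' n xb| := by positivity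
          linarith
        · calc Q n * (p - p') ≤ (G / η) * (p - p') := by nlinarith
            _ ≤ (G / η) * |g n xb - g' n xb| := by
                have hGη0 : 0 ≤ G / η := by positivity
                nlinarith
      nlinarith
    have hid : (1/2)*((1 - η) * Q n + p - γ)^2 - (1/2)*(Q n - γ)^2
        = (Q n - γ) * (p - η * Q n) + (1/2)*(p - η * Q n)^2 := by ring
    have h4 : (Q n - γ) * (p - η * Q n) ≤ Q n * p - γ * p := by
      nlinarith [mul_nonneg (mul_nonneg hη0.le hQpos.le) (sub_nonneg.mpr hQγ)]
    have h5 : (1/2)*(p - η * Q n)^2 ≤ G^2 / 2 := by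
      have hηQ0 : 0 ≤ η * Q n := by positivity
      nlinarith
    linarith [h1, hid, h4, h5, h3]
  -- sum the per-coordinate bounds
  have hsum := Finset.sum_le_sum (s := Finset.univ) fun n _ => key n
  rw [Finset.sum_sub_distrib] at hsum
  -- Cauchy–Schwarz for the deviation sum
  have hcs : ∑ n, |g n xb - g' n xb| ≤ Real.sqrt N * B := by
    have h1 : (∑ n, |g n xb - g' n xb|)^2 ≤ N * ∑ n, (g n xb - g' n xb)^2 := by
      have := sq_sum_le_card_mul_sum_sq (s := Finset.univ)
        (f := fun n => |g n xb - g' n xb|)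
      simpa [sq_abs] using this
    have hs0 : 0 ≤ ∑ n, |g n xb - g' n xb| :=
      Finset.sum_nonneg fun n _ => abs_nonneg _
    have := Real.sqrt_le_sqrt h1
    rw [Real.sqrt_sq hs0] at this
    calc ∑ n, |g n xb - g' n xb|
        ≤ Real.sqrt (N * ∑ n, (g n xb - g' n xb)^2) := this
      _ = Real.sqrt N * Real.sqrt (∑ n, (g n xb - g' n xb)^2) := by
          rw [Real.sqrt_mul (by positivity)]
      _ ≤ Real.sqrt N * B :=
          mul_le_mul_of_nonneg_left (hB xb) (Real.sqrt_nonneg _)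
  have hGη0 : 0 < G / η := by positivity
  have hexpand : ∑ n, (Q n * max (g' n xb) 0 - γ * max (g n xb) 0
        + (G / η) * |g n xb - g' n xb| + G^2 / 2)
      = ∑ n, Q n * max (g' n xb) 0 - γ * ∑ n, max (g n xb) 0
        + (G / η) * ∑ n, |g n xb - g' n xb| + N * (G^2 / 2) := by
    rw [Finset.sum_add_distrib, Finset.sum_add_distrib, Finset.sum_sub_distrib,
      Finset.mul_sum, Finset.mul_sum]
    simp [Finset.card_univ]
  rw [hexpand] at hsum
  have hfin : (G / η) * ∑ n, |g n xb - g' n xb| ≤ (G * Real.sqrt N / η) * B := by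
    calc (G / η) * ∑ n, |g n xb - g' n xb| ≤ (G / η) * (Real.sqrt N * B) :=
          mul_le_mul_of_nonneg_left hcs hGη0.le
      _ = (G * Real.sqrt N / η) * B := by ring
  have hNG : (N : ℝ) * (G^2 / 2) ≤ 2 * N * G^2 := by
    have h : (0:ℝ) ≤ (N:ℝ) * G^2 :=
      mul_nonneg (Nat.cast_nonneg _) (sq_nonneg _)
    nlinarith [h]
  have hlhs : (1 / 2) * ∑ n, (Qh n - γ) ^ 2 - (1 / 2) * ∑ n, (Q n - γ) ^ 2
      = ∑ n, (1/2) * (Qh n - γ)^2 - ∑ n, (1/2) * (Q n - γ)^2 := by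
    rw [Finset.mul_sum, Finset.mul_sum]
  rw [hlhs]
  linarith
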